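/- Let I₁, I₂ ⊆ ℝ be nonempty open intervals, D = (1/2)(I₁+I₂), and φ : D → ℝ such that Z_φ = {u ∈ D : φ(u)=0} is closed in D and has empty interior. Then (φ, f₁, f₂) satisfies φ((x+y)/2)(f₁(x) − f₂(y)) = 0 for all x ∈ I₁, y ∈ I₂ if and only if either φ ≡ 0 on D, or there exists λ ∈ ℝ with f₁ ≡ λ on I₁ and f₂ ≡ λ on I₂. -/
import Mathlib


/-- The set `(1/2)(A + B) = {(a+b)/2 : a ∈ A, b ∈ B}`. -/
def halfSum (A B : Set ℝ) : Set ℝ := {u | ∃ a ∈ A, ∃ b ∈ B, u = (a + b) / 2}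

lemma open_half_add (a : ℝ) {S : Set ℝ} (hS : IsOpen S) :
    IsOpen ((fun y => (a + y) / 2) '' S) := by
  have h : (fun y : ℝ => (a + y) / 2) = (fun z : ℝ => z * (2⁻¹ : ℝ)) ∘ (fun y => a + y) := by
    funext y; simp [div_eq_mul_inv]
  rw [h, Set.image_comp]
  exact (Homeomorph.mulRight₀ (2⁻¹ : ℝ) (by norm_num)).isOpenMap _
    ((Homeomorph.addLeft a).isOpenMap _ hS)

theorem empty_interior_zeros_iff_extremal (I₁ I₂ : Set ℝ)
    (hI₁o : IsOpen I₁) (hI₁c : I₁.OrdConnected) (hI₁n : I₁.Nonempty)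
    (hI₂o : IsOpen I₂) (hI₂c : I₂.OrdConnected) (hI₂n : I₂.Nonempty)
    (φ f₁ f₂ : ℝ → ℝ)
    (hZclosed : closure {u ∈ halfSum I₁ I₂ | φ u = 0} ∩ halfSum I₁ I₂ ⊆
      {u ∈ halfSum I₁ I₂ | φ u = 0})
    (hZint : interior {u ∈ halfSum I₁ I₂ | φ u = 0} = ∅) :
    (∀ x ∈ I₁, ∀ y ∈ I₂, φ ((x + y) / 2) * (f₁ x - f₂ y) = 0) ↔
      ((∀ u ∈ halfSum I₁ I₂, φ u = 0) ∨
        ∃ c : ℝ, (∀ x ∈ I₁, f₁ x = c) ∧ (∀ y ∈ I₂, f₂ y = c)) := by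
  set D := halfSum I₁ I₂ with hD
  set Z := {u ∈ D | φ u = 0} with hZ
  have hmem : ∀ x ∈ I₁, ∀ y ∈ I₂, (x + y) / 2 ∈ D :=
    fun x hx y hy => ⟨x, hx, y, hy, rfl⟩
  have hDopen : IsOpen D := by
    have hrw : D = ⋃ a ∈ I₁, (fun y => (a + y) / 2) '' I₂ := by
      ext u
      simp only [hD, halfSum, Set.mem_setOf_eq, Set.mem_iUnion, Set.mem_image]
      constructor
      · rintro ⟨a, ha, b, hb, rfl⟩; exact ⟨a, ha, b, hb, rfl⟩
      · rintro ⟨a, ha, b, hb, rfl⟩; exact ⟨a, ha, b, hb, rfl⟩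
    rw [hrw]
    exact isOpen_biUnion fun a _ => open_half_add a hI₂o
  -- If an open set meets D, φ is nonzero somewhere on the intersection.
  have keyA : ∀ V : Set ℝ, IsOpen V → (V ∩ D).Nonempty → ∃ u ∈ V ∩ D, φ u ≠ 0 := by
    intro V hV hne
    by_contra hc
    push_neg at hc
    have hsub : V ∩ D ⊆ interior Z :=
      interior_maximal (fun u ⟨huV, huD⟩ => ⟨huD, hc u ⟨huV, huD⟩⟩) (hV.inter hDopen)
    rw [hZint] at hsub
    exact hne.elim fun u hu => (hsub hu).elim
  -- density in the y-direction
  have key2 : ∀ x ∈ I₁, ∀ W : Set ℝ, IsOpen W → (W ∩ I₂).Nonempty →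
      ∃ y ∈ W ∩ I₂, φ ((x + y) / 2) ≠ 0 := by
    intro x hx W hW hne
    obtain ⟨u, ⟨huV, _⟩, hu0⟩ := keyA ((fun y => (x + y) / 2) '' (W ∩ I₂))
      (open_half_add x (hW.inter hI₂o))
      (by
        obtain ⟨y0, hy0⟩ := hne
        exact ⟨(x + y0) / 2, ⟨y0, hy0, rfl⟩, hmem x hx y0 hy0.2⟩)
    obtain ⟨y, hy, rfl⟩ := huV
    exact ⟨y, hy, hu0⟩
  -- density in the x-direction
  have key1 : ∀ y ∈ I₂, ∃ x ∈ I₁, φ ((x + y) / 2) ≠ 0 := by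
    intro y hy
    obtain ⟨u, ⟨huV, _⟩, hu0⟩ := keyA ((fun x => (y + x) / 2) '' I₁)
      (open_half_add y hI₁o)
      (by
        obtain ⟨x0, hx0⟩ := hI₁n
        refine ⟨(y + x0) / 2, ⟨x0, hx0, rfl⟩, ?_⟩
        rw [add_comm]; exact hmem x0 hx0 y hy)
    obtain ⟨x, hx, rfl⟩ := huV
    refine ⟨x, hx, ?_⟩
    rwa [add_comm]
  -- the nonzero fiber sets are open
  have hVopen : ∀ x ∈ I₁, IsOpen {y | y ∈ I₂ ∧ φ ((x + y) / 2) ≠ 0} := by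
    intro x hx
    have heq : {y | y ∈ I₂ ∧ φ ((x + y) / 2) ≠ 0} =
        I₂ ∩ (fun y => (x + y) / 2) ⁻¹' (closure Z)ᶜ := by
      ext y
      simp only [Set.mem_setOf_eq, Set.mem_inter_iff, Set.mem_preimage, Set.mem_compl_iff]
      constructor
      · rintro ⟨hyI, hy0⟩
        exact ⟨hyI, fun hcl => hy0 (hZclosed ⟨hcl, hmem x hx y hyI⟩).2⟩
      · rintro ⟨hyI, hcl⟩
        exact ⟨hyI, fun h0 => hcl (subset_closure ⟨hmem x hx y hyI, h0⟩)⟩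
    rw [heq]
    exact hI₂o.inter (IsOpen.preimage (by fun_prop) isClosed_closure.isOpen_compl)
  constructor
  · intro h
    right
    obtain ⟨x₀, hx₀⟩ := hI₁n
    refine ⟨f₁ x₀, ?_, ?_⟩
    · intro x hx
      have hWne : ({y | y ∈ I₂ ∧ φ ((x₀ + y) / 2) ≠ 0} ∩ I₂).Nonempty := by
        obtain ⟨y0, hy0, h0⟩ := key2 x₀ hx₀ Set.univ isOpen_univ
          (by obtain ⟨y0, hy0⟩ := hI₂n; exact ⟨y0, Set.mem_univ _, hy0⟩)
        exact ⟨y0, ⟨hy0.2, h0⟩, hy0.2⟩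
      obtain ⟨y, ⟨⟨hyI, hy0⟩, _⟩, hyx⟩ :=
        key2 x hx {y | y ∈ I₂ ∧ φ ((x₀ + y) / 2) ≠ 0} (hVopen x₀ hx₀) hWne
      have e1 : f₁ x = f₂ y := by
        have := h x hx y hyI
        rcases mul_eq_zero.mp this with h' | h'
        · exact absurd h' hyx
        · linarith
      have e2 : f₁ x₀ = f₂ y := by
        have := h x₀ hx₀ y hyI
        rcases mul_eq_zero.mp this with h' | h'
        · exact absurd h' hy0
        · linarith
      rw [e1, e2]
    · intro y hy
      obtain ⟨x, hx, hx0⟩ := key1 y hy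
      have e1 : f₁ x = f₂ y := by
        have := h x hx y hy
        rcases mul_eq_zero.mp this with h' | h'
        · exact absurd h' hx0
        · linarith
      -- f₁ x = f₁ x₀ : reuse the constancy just proved? Prove it inline.
      have hWne : ({y | y ∈ I₂ ∧ φ ((x₀ + y) / 2) ≠ 0} ∩ I₂).Nonempty := by
        obtain ⟨y0, hy0, h0⟩ := key2 x₀ hx₀ Set.univ isOpen_univ
          (by obtain ⟨y0, hy0⟩ := hI₂n; exact ⟨y0, Set.mem_univ _, hy0⟩)
        exact ⟨y0, ⟨hy0.2, h0⟩, hy0.2⟩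
      obtain ⟨y', ⟨⟨hyI', hy0'⟩, _⟩, hyx'⟩ :=
        key2 x hx {y | y ∈ I₂ ∧ φ ((x₀ + y) / 2) ≠ 0} (hVopen x₀ hx₀) hWne
      have e2 : f₁ x = f₂ y' := by
        have := h x hx y' hyI'
        rcases mul_eq_zero.mp this with h' | h'
        · exact absurd h' hyx'
        · linarith
      have e3 : f₁ x₀ = f₂ y' := by
        have := h x₀ hx₀ y' hyI'
        rcases mul_eq_zero.mp this with h' | h'
        · exact absurd h' hy0'
        · linarith
      rw [← e1, e2, e3]
  · rintro (h | ⟨c, h1, h2⟩) <;> intro x hx y hy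
    · rw [h _ (hmem x hx y hy), zero_mul]
    · rw [h1 x hx, h2 y hy, sub_self, mul_zero]
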